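/- Let f : V → ℝ ∪ {+∞} be a function on a real vector space V and let v ∈ V. Then the following are equivalent: (1) there exists a ∈ ℝ such that f(x + v) = f(x) + a for all x ∈ V; (2) there exists a ∈ ℝ such that f(x + t·v) = f(x) + t·a for all x ∈ V and all t ∈ ℝ, provided f is convex. (In particular, for convex f the two definitions of the lineality-type set E(f) agree.) -/

import Mathlib

/-- The epigraph of an `EReal`-valued function. -/
def epigraph {V : Type*} (f : V → EReal) : Set (V × ℝ) :=
  {p | f p.1 ≤ (p.2 : EReal)}

section Aux

variable {V : Type*} [AddCommGroup V] [Module ℝ V]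

private lemma ereal_add_cancel {p q : EReal} {a : ℝ}
    (h : p + (a : EReal) = q + (a : EReal)) : p = q := by
  have := congrArg (· - (a : EReal)) h
  simpa [EReal.add_sub_cancel_right] using this

private lemma ereal_cases (x : EReal) (hb : x ≠ ⊥) : x = ⊤ ∨ ∃ r : ℝ, x = r := by
  rcases eq_or_ne x ⊤ with h | h
  · exact Or.inl h
  · exact Or.inr ⟨x.toReal, (EReal.coe_toReal h hb).symm⟩

/-- Integer translation. -/
private lemma int_shift (f : V → EReal) (v : V) (a : ℝ)
    (h : ∀ x : V, f (x + v) = f x + (a : EReal)) :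
    ∀ (n : ℤ) (x : V), f (x + (n : ℝ) • v) = f x + (((n : ℝ) * a : ℝ) : EReal) := by
  intro n
  induction n using Int.induction_on with
  | zero => intro x; simp
  | succ n ih =>
      intro x
      have hcast : ((n + 1 : ℤ) : ℝ) = (((n : ℤ) : ℝ)) + 1 := by push_cast; ring
      have h1 : x + ((n + 1 : ℤ) : ℝ) • v = (x + ((n : ℤ) : ℝ) • v) + v := by
        rw [hcast, add_smul, one_smul, add_assoc]
      have hc2 : (((n : ℤ) : ℝ) * a + a : ℝ) = (((n + 1 : ℤ) : ℝ) * a : ℝ) := by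
        push_cast; ring
      rw [h1, h, ih, add_assoc, ← EReal.coe_add, hc2]
  | pred n ih =>
      intro x
      have hcast : ((-n : ℤ) : ℝ) = (((-n - 1 : ℤ) : ℝ)) + 1 := by push_cast; ring
      have h1 : (x + ((-n - 1 : ℤ) : ℝ) • v) + v = x + ((-n : ℤ) : ℝ) • v := by
        rw [hcast, add_smul, one_smul, add_assoc]
      have h2 := h (x + ((-n - 1 : ℤ) : ℝ) • v)
      rw [h1, ih] at h2
      have hc2 : (((-n : ℤ) : ℝ) * a : ℝ) = ((-n - 1 : ℤ) : ℝ) * a + a := by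
        push_cast; ring
      rw [hc2, EReal.coe_add, ← add_assoc] at h2
      exact (ereal_add_cancel h2).symm

/-- Fractional translation, using convexity. -/
private lemma frac_shift (f : V → EReal) (hbot : ∀ x, f x ≠ ⊥)
    (hconv : Convex ℝ (epigraph f)) (v : V) (a : ℝ)
    (h : ∀ x : V, f (x + v) = f x + (a : EReal)) :
    ∀ (s : ℝ), 0 ≤ s → s ≤ 1 → ∀ x : V, f (x + s • v) = f x + ((s * a : ℝ) : EReal) := by
  intro s hs0 hs1 x
  rcases ereal_cases (f x) (hbot x) with hx | ⟨r, hx⟩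
  · -- f x = ⊤ : show f (x + s • v) = ⊤
    rw [hx, EReal.top_add_coe]
    by_contra hne
    rcases ereal_cases (f (x + s • v)) (hbot _) with h' | ⟨c, hc⟩
    · exact hne h'
    -- f (x + (s-1) • v) = c - a
    set y := x + (s - 1) • v with hy
    have hyv : y + v = x + s • v := by
      rw [hy, show (s - 1) • v = s • v + (-1 : ℝ) • v by rw [← add_smul]; ring_nf]
      simp; abel
    have h2 := h y
    rw [hyv, hc] at h2
    have hyval : f y = ((c - a : ℝ) : EReal) := by
      have he : ((c : ℝ) : EReal) = ((c - a : ℝ) : EReal) + (a : EReal) := by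
        rw [← EReal.coe_add]; ring_nf
      rw [he] at h2
      exact ereal_add_cancel h2.symm
    have hp1 : ((x + s • v, c) : V × ℝ) ∈ epigraph f := by
      simp only [epigraph, Set.mem_setOf_eq, hc]; exact le_refl _
    have hp2 : ((y, c - a) : V × ℝ) ∈ epigraph f := by
      simp only [epigraph, Set.mem_setOf_eq, hyval]; exact le_refl _
    have hmem := hconv hp1 hp2 (by linarith : (0:ℝ) ≤ 1 - s) hs0 (by ring)
    have hfst : (1 - s) • (x + s • v) + s • y = x := by
      rw [hy]; module
    have heq : (1 - s) • ((x + s • v, c) : V × ℝ) + s • ((y, c - a) : V × ℝ)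
        = (x, (1 - s) * c + s * (c - a)) := by
      refine Prod.ext ?_ ?_
      · simpa using hfst
      · simp [smul_eq_mul]
    rw [heq] at hmem
    have hle : f x ≤ (((1 - s) * c + s * (c - a) : ℝ) : EReal) := hmem
    rw [hx] at hle
    exact not_le.mpr (EReal.coe_lt_top _) hle
  · -- f x = r : finite case
    -- upper bound
    have hfxv : f (x + v) = ((r + a : ℝ) : EReal) := by rw [h, hx, ← EReal.coe_add]
    have hp1 : ((x, r) : V × ℝ) ∈ epigraph f := by
      simp only [epigraph, Set.mem_setOf_eq, hx]; exact le_refl _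
    have hp2 : ((x + v, r + a) : V × ℝ) ∈ epigraph f := by
      simp only [epigraph, Set.mem_setOf_eq, hfxv]; exact le_refl _
    have hmem := hconv hp1 hp2 (by linarith : (0:ℝ) ≤ 1 - s) hs0 (by ring)
    have hfst : (1 - s) • x + s • (x + v) = x + s • v := by module
    have heq : (1 - s) • ((x, r) : V × ℝ) + s • ((x + v, r + a) : V × ℝ)
        = (x + s • v, (1 - s) * r + s * (r + a)) := by
      refine Prod.ext ?_ ?_
      · simpa using hfst
      · simp [smul_eq_mul]
    rw [heq] at hmem
    have hupper : f (x + s • v) ≤ (((1 - s) * r + s * (r + a) : ℝ) : EReal) := hmem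
    have hupper' : f (x + s • v) ≤ ((r + s * a : ℝ) : EReal) := by
      rw [show (1 - s) * r + s * (r + a) = r + s * a by ring] at hupper
      exact hupper
    have hnetop : f (x + s • v) ≠ ⊤ := by
      intro htop; rw [htop] at hupper'
      exact not_le.mpr (EReal.coe_lt_top _) hupper'
    obtain ⟨c, hc⟩ : ∃ c : ℝ, f (x + s • v) = c := by
      rcases ereal_cases _ (hbot (x + s • v)) with h' | h'
      · exact absurd h' hnetop
      · exact h'
    have hcle : c ≤ r + s * a := by
      rw [hc] at hupper'; exact EReal.coe_le_coe_iff.mp hupper'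
    -- lower bound: f (x - v) = r - a
    have hxmv : f (x - v) = ((r - a : ℝ) : EReal) := by
      have h2 := h (x - v)
      rw [sub_add_cancel, hx] at h2
      have he : ((r : ℝ) : EReal) = ((r - a : ℝ) : EReal) + (a : EReal) := by
        rw [← EReal.coe_add]; ring_nf
      rw [he] at h2
      exact ereal_add_cancel h2.symm
    set θ : ℝ := 1 / (1 + s) with hθ
    have hpos : (0:ℝ) < 1 + s := by linarith
    have hθpos : 0 < θ := by positivity
    have hθle : θ ≤ 1 := by
      rw [hθ, div_le_one hpos]; linarith
    have hθ1 : θ * (1 + s) = 1 := by rw [hθ]; field_simp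
    have hθs : θ * s = 1 - θ := by rw [hθ]; field_simp; ring
    have hq1 : ((x + s • v, c) : V × ℝ) ∈ epigraph f := by
      simp only [epigraph, Set.mem_setOf_eq, hc]; exact le_refl _
    have hq2 : ((x - v, r - a) : V × ℝ) ∈ epigraph f := by
      simp only [epigraph, Set.mem_setOf_eq, hxmv]; exact le_refl _
    have hmem2 := hconv hq1 hq2 hθpos.le (by linarith : (0:ℝ) ≤ 1 - θ) (by ring)
    have hfst2 : θ • (x + s • v) + (1 - θ) • (x - v) = x := by
      rw [smul_add, smul_smul, hθs, smul_sub]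
      module
    have heq2 : θ • ((x + s • v, c) : V × ℝ) + (1 - θ) • ((x - v, r - a) : V × ℝ)
        = (x, θ * c + (1 - θ) * (r - a)) := by
      refine Prod.ext ?_ ?_
      · simpa using hfst2
      · simp [smul_eq_mul]
    rw [heq2] at hmem2
    have hlower : ((r : ℝ) : EReal) ≤ ((θ * c + (1 - θ) * (r - a) : ℝ) : EReal) := by
      rw [← hx]; exact hmem2
    have hlower' : r ≤ θ * c + (1 - θ) * (r - a) := EReal.coe_le_coe_iff.mp hlower
    have hexp : (1 + s) * (θ * c + (1 - θ) * (r - a)) = c + s * (r - a) := by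
      rw [hθ]; field_simp; ring
    have hmul : (1 + s) * r ≤ (1 + s) * (θ * c + (1 - θ) * (r - a)) :=
      mul_le_mul_of_nonneg_left hlower' hpos.le
    rw [hexp] at hmul
    have hcge : r + s * a ≤ c := by nlinarith [hmul]
    have hce : c = r + s * a := le_antisymm hcle hcge
    rw [hc, hce, hx, ← EReal.coe_add]

end Aux

/-- for a convex function `f : V → ℝ ∪ {+∞}`, a vector `v`
satisfies `f(x+v) = f(x) + a` for all `x` (some `a ∈ ℝ`) if and only if
`f(x + t v) = f(x) + t a` for all `x` and all `t ∈ ℝ` (some `a ∈ ℝ`). -/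
theorem translation_affine_iff_line_affine
    {V : Type*} [AddCommGroup V] [Module ℝ V]
    (f : V → EReal) (hbot : ∀ x, f x ≠ ⊥) (hconv : Convex ℝ (epigraph f))
    (v : V) :
    (∃ a : ℝ, ∀ x : V, f (x + v) = f x + (a : EReal)) ↔
      (∃ a : ℝ, ∀ (x : V) (t : ℝ), f (x + t • v) = f x + ((t * a : ℝ) : EReal)) := by
  constructor
  · rintro ⟨a, h⟩
    refine ⟨a, fun x t => ?_⟩
    set n : ℤ := ⌊t⌋ with hn
    set s : ℝ := t - n with hs
    have hs0 : 0 ≤ s := by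
      rw [hs]; have := Int.floor_le t; linarith
    have hs1 : s ≤ 1 := by
      rw [hs]; have := Int.lt_floor_add_one t; linarith
    have hsplit : x + t • v = (x + (n : ℝ) • v) + s • v := by
      rw [add_assoc, ← add_smul]
      congr 2
      rw [hs]; ring
    rw [hsplit, frac_shift f hbot hconv v a h s hs0 hs1,
      int_shift f v a h n x, add_assoc, ← EReal.coe_add]
    congr 2
    rw [hs]; ring
  · rintro ⟨a, h⟩
    refine ⟨a, fun x => ?_⟩
    have := h x 1
    rw [one_smul, one_mul] at this
    exact this
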